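/- Let S be a Seidel matrix of order n and k an odd integer. Then the shifted characteristic polynomial Char_S(x + k) is weakly type 2; moreover, if n is even, then Char_S(x + k) is type 2. -/

import Mathlib

open Polynomial

/-- A monic polynomial `p = Σ aᵢ x^(n-i)` in `ℤ[x]` is *type 2* if `2^i ∣ aᵢ`
for all `i ≥ 0`, i.e. `2^(n-j) ∣ coeff p j` for all `j ≤ n`. -/
def IsType2 (p : Polynomial ℤ) : Prop :=
  ∀ j ≤ p.natDegree, (2 : ℤ) ^ (p.natDegree - j) ∣ p.coeff j

/-- A monic polynomial `p = Σ aᵢ x^(n-i)` in `ℤ[x]` is *weakly type 2* if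
`2^(i-1) ∣ aᵢ` for all `i ≥ 1`, i.e. `2^(n-j-1) ∣ coeff p j` for all `j < n`. -/
def IsWeaklyType2 (p : Polynomial ℤ) : Prop :=
  ∀ j < p.natDegree, (2 : ℤ) ^ (p.natDegree - j - 1) ∣ p.coeff j

/-- A Seidel matrix of order `n`: a symmetric integer matrix with zero diagonal
and all off-diagonal entries `±1`. -/
def IsSeidel {n : ℕ} (S : Matrix (Fin n) (Fin n) ℤ) : Prop :=
  S.IsSymm ∧ (∀ i, S i i = 0) ∧ ∀ i j, i ≠ j → S i j = 1 ∨ S i j = -1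

namespace SeidelAux

open Matrix

lemma coeff_comp_C_mul_X (p : ℤ[X]) (s : ℤ) (j : ℕ) :
    (p.comp (C s * X)).coeff j = s ^ j * p.coeff j := by
  induction p using Polynomial.induction_on' with
  | add p q hp hq => simp only [add_comp, coeff_add, hp, hq, mul_add]
  | monomial m a =>
      rw [monomial_comp, mul_pow, ← C_pow, ← mul_assoc, ← C_mul, coeff_C_mul, coeff_X_pow,
        coeff_monomial]
      by_cases hjm : j = m
      · subst hjm; simp; ring
      · simp [hjm, Ne.symm hjm]

/-- An odd-size involution has a fixed point. -/
lemma exists_fixed {m : ℕ} (hm : Odd m) (σ : Equiv.Perm (Fin m)) (hσ : σ⁻¹ = σ) :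
    ∃ i, σ i = i := by
  by_contra h
  push_neg at h
  have h0 : (∑ _i : Fin m, (1 : ZMod 2)) = 0 := by
    refine Finset.sum_involution (fun i _ => σ i) ?_ ?_ ?_ ?_
    · intro a _; decide
    · intro a _ _; exact h a
    · intro a _; exact Finset.mem_univ _
    · intro a _
      nth_rewrite 1 [← hσ]
      simp
  have h1 : (∑ _i : Fin m, (1 : ZMod 2)) = (m : ZMod 2) := by simp
  rw [h1] at h0
  obtain ⟨t, ht⟩ := hm
  rw [ht] at h0
  push_cast at h0
  rw [show ((2 : ZMod 2)) = 0 by decide] at h0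
  simp at h0

/-- Over a commutative ring in which `2 = 0`, a symmetric matrix of odd size
with zero diagonal has zero determinant. -/
lemma det_eq_zero_of_alt {A : Type*} [CommRing A] (h2 : (2 : A) = 0)
    {m : ℕ} (hm : Odd m) (M : Matrix (Fin m) (Fin m) A)
    (hsym : ∀ i j, M i j = M j i) (hdiag : ∀ i, M i i = 0) :
    M.det = 0 := by
  rw [Matrix.det_apply]
  refine Finset.sum_involution (fun σ _ => σ⁻¹) ?_ ?_ ?_ ?_
  · intro σ _
    have hprod : (∏ i, M (σ⁻¹ i) i) = ∏ i, M (σ i) i := by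
      rw [← Equiv.prod_comp σ (fun i => M (σ⁻¹ i) i)]
      simp only [Equiv.Perm.inv_def, Equiv.symm_apply_apply]
      exact Finset.prod_congr rfl fun i _ => hsym i (σ i)
    rw [Equiv.Perm.sign_inv, hprod, ← smul_add, ← two_mul, h2, zero_mul, smul_zero]
  · intro σ _ hne
    by_contra heq
    apply hne
    obtain ⟨i, hi⟩ := exists_fixed hm σ heq
    have hz : (∏ i, M (σ i) i) = 0 :=
      Finset.prod_eq_zero (Finset.mem_univ i) (by rw [hi]; exact hdiag i)
    rw [hz, smul_zero]
  · intro σ _; exact Finset.mem_univ _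
  · intro σ _; exact inv_inv σ

/-- Factor out `2` from every row except row `0`. -/
lemma factor_rows {m : ℕ} (B : Matrix (Fin (m + 1)) (Fin (m + 1)) ℤ[X])
    (h : ∀ i j, i ≠ 0 → (2 : ℤ[X]) ∣ B i j) :
    ∃ E : Matrix (Fin (m + 1)) (Fin (m + 1)) ℤ[X],
      B.det = 2 ^ m * E.det ∧ (∀ j, E 0 j = B 0 j) ∧
        ∀ i j, i ≠ 0 → B i j = 2 * E i j := by
  classical
  set E : Matrix (Fin (m + 1)) (Fin (m + 1)) ℤ[X] :=
    Matrix.of fun i j => if hi : i = 0 then B 0 j else (h i j hi).choose with hEdef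
  refine ⟨E, ?_, ?_, ?_⟩
  · have hB : B = Matrix.of fun i j => (if i = 0 then (1:ℤ[X]) else 2) * E i j := by
      funext i j
      by_cases hi : i = 0
      · subst hi; simp [hEdef]
      · simp only [Matrix.of_apply, if_neg hi, hEdef, dif_neg hi]
        exact (h i j hi).choose_spec
    have hdet := congrArg Matrix.det hB
    rw [Matrix.det_mul_column] at hdet
    rw [hdet]
    congr 1
    rw [Fin.prod_univ_succ]
    simp [Fin.succ_ne_zero]
  · intro j; simp [hEdef]
  · intro i j hi
    simp only [hEdef, Matrix.of_apply, dif_neg hi]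
    exact (h i j hi).choose_spec

/-- Weak divisibility: if all entries of a row differ from the corresponding
entries of row `0` by even elements, then `2^m ∣ det`. -/
lemma weak_dvd {m : ℕ} (B : Matrix (Fin (m + 1)) (Fin (m + 1)) ℤ[X])
    (h : ∀ i j, (2 : ℤ[X]) ∣ (B i j - B 0 j)) : (2 : ℤ[X]) ^ m ∣ B.det := by
  classical
  set B₁ : Matrix (Fin (m + 1)) (Fin (m + 1)) ℤ[X] :=
    Matrix.of fun i j => if i = 0 then B i j else B i j - B 0 j with hB₁
  have hdet : B.det = B₁.det := by
    apply Matrix.det_eq_of_forall_row_eq_smul_add_const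
      (fun i => if i = 0 then 0 else 1) 0 (by simp)
    intro i j
    by_cases hi : i = 0
    · subst hi; simp [hB₁]
    · simp [hB₁, hi]
  obtain ⟨E, hE, _, _⟩ := factor_rows B₁ (fun i j hi => by
    simpa [hB₁, hi] using h i j)
  rw [hdet, hE]
  exact Dvd.intro _ rfl

/-- Key even-order divisibility lemma. -/
lemma even_dvd {m : ℕ} (hm : Odd m) (B : Matrix (Fin (m + 1)) (Fin (m + 1)) ℤ[X])
    (hsym : ∀ i j, B i j = B j i) (hdiag : ∀ i, B i i = B 0 0)
    (h : ∀ i j, (2 : ℤ[X]) ∣ (B i j - B 0 0)) : (2 : ℤ[X]) ^ (m + 1) ∣ B.det := by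
  classical
  have hpair : ∀ i j i' j', (2 : ℤ[X]) ∣ (B i j - B i' j') := by
    intro i j i' j'
    have := dvd_sub (h i j) (h i' j')
    simpa using this
  set B₁ : Matrix (Fin (m + 1)) (Fin (m + 1)) ℤ[X] :=
    Matrix.of fun i j => if i = 0 then B i j else B i j - B 0 j with hB₁
  have hdet1 : B.det = B₁.det := by
    apply Matrix.det_eq_of_forall_row_eq_smul_add_const
      (fun i => if i = 0 then 0 else 1) 0 (by simp)
    intro i j
    by_cases hi : i = 0
    · subst hi; simp [hB₁]
    · simp [hB₁, hi]
  set B₂ : Matrix (Fin (m + 1)) (Fin (m + 1)) ℤ[X] :=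
    Matrix.of fun i j => if j = 0 then B₁ i j else B₁ i j - B₁ i 0 with hB₂
  have hdet2 : B₁.det = B₂.det := by
    rw [← Matrix.det_transpose B₁, ← Matrix.det_transpose B₂]
    apply Matrix.det_eq_of_forall_row_eq_smul_add_const
      (fun i => if i = 0 then 0 else 1) 0 (by simp)
    intro i j
    by_cases hi : i = 0
    · subst hi; simp [hB₂]
    · simp [hB₂, Matrix.transpose_apply, hi]
  have hB₂succ : ∀ i j : Fin m,
      B₂ i.succ j.succ = (B i.succ j.succ - B 0 j.succ) - (B i.succ 0 - B 0 0) := by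
    intro i j
    simp [hB₂, hB₁, Fin.succ_ne_zero]
  have hdvd2 : ∀ i j, i ≠ 0 → (2 : ℤ[X]) ∣ B₂ i j := by
    intro i j hi
    by_cases hj : j = 0
    · subst hj
      simpa [hB₂, hB₁, hi] using hpair i 0 0 0
    · have e : B₂ i j = (B i j - B 0 j) - (B i 0 - B 0 0) := by
        simp [hB₂, hB₁, hi, hj]
      rw [e]
      exact dvd_sub (hpair i j 0 j) (hpair i 0 0 0)
  obtain ⟨E, hE, hE0, hEi⟩ := factor_rows B₂ hdvd2
  set f : ℤ →+* ZMod 2 := Int.castRingHom (ZMod 2) with hf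
  set π : ℤ[X] →+* (ZMod 2)[X] := Polynomial.mapRingHom f with hπ
  have hchar : (2 : (ZMod 2)[X]) = 0 := by
    rw [← map_ofNat (C : ZMod 2 →+* (ZMod 2)[X]) 2, show (2 : ZMod 2) = 0 by decide, map_zero]
  have hπ2 : π (2 : ℤ[X]) = 2 := by rw [hπ]; simp
  have hπ0 : ∀ r : ℤ[X], (2 : ℤ[X]) ∣ r → π r = 0 := by
    rintro r ⟨c, rfl⟩
    rw [_root_.map_mul, hπ2, hchar, zero_mul]
  have hπdvd : π E.det = 0 → (2 : ℤ[X]) ∣ E.det := by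
    intro h0
    rw [← map_ofNat (C : ℤ →+* ℤ[X]) 2, Polynomial.C_dvd_iff_dvd_coeff]
    intro i
    have hcm : f (E.det.coeff i) = 0 := by
      have hc : (π E.det).coeff i = f (E.det.coeff i) := Polynomial.coeff_map f i
      rw [h0] at hc
      simpa using hc.symm
    exact (ZMod.intCast_zmod_eq_zero_iff_dvd _ 2).mp hcm
  have hdetE : (2 : ℤ[X]) ∣ E.det := by
    apply hπdvd
    rw [RingHom.map_det, Matrix.det_succ_row_zero]
    simp only [RingHom.mapMatrix_apply]
    apply Finset.sum_eq_zero
    intro j _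
    by_cases hj : j = 0
    · subst hj
      have hGalt : ((E.map π).submatrix Fin.succ (Fin.succAbove 0)).det = 0 := by
        rw [Fin.succAbove_zero]
        apply det_eq_zero_of_alt hchar hm
        · intro i j
          simp only [Matrix.submatrix_apply, Matrix.map_apply]
          have h2 : (2 : ℤ[X]) * E i.succ j.succ = (2 : ℤ[X]) * E j.succ i.succ := by
            rw [← hEi _ _ (Fin.succ_ne_zero i), ← hEi _ _ (Fin.succ_ne_zero j),
              hB₂succ i j, hB₂succ j i, hsym i.succ j.succ, hsym i.succ 0, hsym 0 j.succ]
            ring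
          rw [mul_left_cancel₀ (by norm_num : (2:ℤ[X]) ≠ 0) h2]
        · intro i
          simp only [Matrix.submatrix_apply, Matrix.map_apply]
          have h2 : (2 : ℤ[X]) * E i.succ i.succ =
              (2 : ℤ[X]) * (B 0 0 - B 0 i.succ) := by
            rw [← hEi _ _ (Fin.succ_ne_zero i), hB₂succ i i, hdiag i.succ, hsym i.succ 0]
            ring
          rw [mul_left_cancel₀ (by norm_num : (2:ℤ[X]) ≠ 0) h2]
          apply hπ0
          have h7 := dvd_neg.mpr (h 0 i.succ)
          rwa [neg_sub] at h7
      rw [hGalt, mul_zero]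
    · have hz : (E.map π) 0 j = 0 := by
        simp only [Matrix.map_apply]
        rw [hE0 j]
        apply hπ0
        have e : B₂ 0 j = B 0 j - B 0 0 := by
          simp [hB₂, hB₁, hj]
        rw [e]
        exact h 0 j
      rw [hz, mul_zero, zero_mul]
  obtain ⟨c, hc⟩ := hdetE
  rw [hdet1, hdet2, hE, hc]
  exact ⟨c, by ring⟩

end SeidelAux

open SeidelAux Matrix in
theorem seidel_shifted_charpoly_type2 (n : ℕ)
    (S : Matrix (Fin n) (Fin n) ℤ) (hS : IsSeidel S) (k : ℤ) (hk : Odd k) :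
    IsWeaklyType2 (S.charpoly.comp (X + C k)) ∧
      (Even n → IsType2 (S.charpoly.comp (X + C k))) := by
  obtain ⟨hsymm, hdiag, hoff⟩ := hS
  set q : ℤ[X] := S.charpoly.comp (X + C k) with hq
  have hdeg : q.natDegree = n := by
    rw [hq, natDegree_comp, natDegree_X_add_C, mul_one,
      Matrix.charpoly_natDegree_eq_dim, Fintype.card_fin]
  rcases n with _ | m
  · constructor
    · intro j hj
      rw [hdeg] at hj
      exact absurd hj (Nat.not_lt_zero j)
    · intro _ j hj
      rw [hdeg] at hj
      obtain rfl := Nat.le_zero.mp hj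
      simpa [hdeg] using one_dvd _
  · set B : Matrix (Fin (m + 1)) (Fin (m + 1)) ℤ[X] :=
      Matrix.of fun i j => if i = j then C 2 * X + C k else C (-(S i j)) with hB
    have hB00 : B 0 0 = C 2 * X + C k := by simp [hB]
    have hcomp : q.comp (C 2 * X) = B.det := by
      rw [hq, comp_assoc]
      have h1 : (X + C k).comp (C 2 * X) = C 2 * X + C k := by simp
      rw [h1]
      have h2 : S.charpoly.comp (C 2 * X + C k)
          = ((charmatrix S).map
              (eval₂RingHom Polynomial.C (C 2 * X + C k) : ℤ[X] →+* ℤ[X])).det := by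
        rw [Matrix.charpoly, ← RingHom.mapMatrix_apply, ← RingHom.map_det]
        rfl
      rw [h2]
      congr 1
      funext i j
      by_cases hij : i = j
      · subst hij
        rw [Matrix.map_apply, charmatrix_apply_eq, hdiag i]
        simp only [map_zero, sub_zero, coe_eval₂RingHom, eval₂_sub, eval₂_X, eval₂_C]
        simp [hB]
      · rw [Matrix.map_apply, charmatrix_apply_ne _ _ _ hij]
        simp only [coe_eval₂RingHom, eval₂_neg, eval₂_C]
        simp [hB, hij, C_neg]
    have hBsym : ∀ i j, B i j = B j i := by
      intro i j
      by_cases hij : i = j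
      · subst hij; rfl
      · simp only [hB, Matrix.of_apply, if_neg hij, if_neg (Ne.symm hij)]
        rw [hsymm.apply j i]
    have hBdiag : ∀ i, B i i = B 0 0 := by
      intro i; simp [hB]
    have hBodd : ∀ i j, (2 : ℤ[X]) ∣ (B i j - B 0 0) := by
      intro i j
      rw [hB00]
      by_cases hij : i = j
      · simp [hB, hij]
      · have h1 : B i j = C (-(S i j)) := by simp [hB, hij]
        rw [h1]
        have hs : (2 : ℤ) ∣ (-(S i j) - k) := by
          obtain ⟨t, ht⟩ := hk
          rcases hoff i j hij with h | h
          · exact ⟨-t - 1, by rw [h, ht]; ring⟩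
          · exact ⟨-t, by rw [h, ht]; ring⟩
        obtain ⟨u, hu⟩ := hs
        refine ⟨C u - X, ?_⟩
        have h3 : (-(S i j) : ℤ) = k + 2 * u := by linarith
        rw [h3, C_add, C_mul, show (C (2:ℤ)) = (2:ℤ[X]) from map_ofNat C 2]
        ring
    have hpairB : ∀ i j, (2 : ℤ[X]) ∣ (B i j - B 0 j) := by
      intro i j
      have := dvd_sub (hBodd i j) (hBodd 0 j)
      simpa using this
    have hweak : (2 : ℤ[X]) ^ m ∣ B.det := weak_dvd B hpairB
    have hcoe : ∀ j : ℕ, (2 : ℤ) ^ m ∣ 2 ^ j * q.coeff j := by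
      intro j
      have hdd : (C ((2:ℤ) ^ m) : ℤ[X]) ∣ q.comp (C 2 * X) := by
        rw [hcomp, map_pow, show (C (2:ℤ)) = (2:ℤ[X]) from map_ofNat C 2]; exact hweak
      have := (Polynomial.C_dvd_iff_dvd_coeff ((2:ℤ) ^ m) (q.comp (C 2 * X))).mp hdd j
      rwa [coeff_comp_C_mul_X] at this
    constructor
    · intro j hj
      rw [hdeg] at hj ⊢
      have h5 : (2:ℤ) ^ j * 2 ^ (m - j) ∣ 2 ^ j * q.coeff j := by
        rw [← pow_add, show j + (m - j) = m by omega]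
        exact hcoe j
      have h6 := (mul_dvd_mul_iff_left (a := (2:ℤ) ^ j)
        (pow_ne_zero _ two_ne_zero)).mp h5
      have h7 : m + 1 - j - 1 = m - j := by omega
      rwa [h7]
    · intro hn
      have hmodd : Odd m := Nat.not_even_iff_odd.mp (Nat.even_add_one.mp hn)
      have heven : (2 : ℤ[X]) ^ (m + 1) ∣ B.det := even_dvd hmodd B hBsym hBdiag hBodd
      have hcoe' : ∀ j : ℕ, (2 : ℤ) ^ (m + 1) ∣ 2 ^ j * q.coeff j := by
        intro j
        have hdd : (C ((2:ℤ) ^ (m + 1)) : ℤ[X]) ∣ q.comp (C 2 * X) := by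
          rw [hcomp, map_pow, show (C (2:ℤ)) = (2:ℤ[X]) from map_ofNat C 2]; exact heven
        have := (Polynomial.C_dvd_iff_dvd_coeff ((2:ℤ) ^ (m + 1)) (q.comp (C 2 * X))).mp hdd j
        rwa [coeff_comp_C_mul_X] at this
      intro j hj
      rw [hdeg] at hj ⊢
      have h5 : (2:ℤ) ^ j * 2 ^ (m + 1 - j) ∣ 2 ^ j * q.coeff j := by
        rw [← pow_add, show j + (m + 1 - j) = m + 1 by omega]
        exact hcoe' j
      exact (mul_dvd_mul_iff_left (a := (2:ℤ) ^ j)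
        (pow_ne_zero _ two_ne_zero)).mp h5
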